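/- Let h : [0,T] × ℝ^S × U → ℝ^S be continuous, linear in π and affine in u, where S is a finite set and U = ∏_{i∈I}[−b_i, b_i]. Let π, π* : [0,t̂] → ℝ^S be solutions of π̇(t) = h(t, π(t), u(t)) and π̇*(t) = h(t, π*(t), u*(t)) with π(0) = π*(0), where u, u* : [0,t̂] → U are measurable. Let p : [0,t̂] → ℝ^S be absolutely continuous and satisfy ṗ(t) = −(∂_π h)(t, π*(t), u*(t))ᵀ p(t). Then ⟨p(t̂), π(t̂) − π*(t̂)⟩ = ∫_0^{t̂} ⟨p(t), h(t, π(t), u(t)) − h(t, π(t), u*(t))⟩ dt. -/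

import Mathlib

theorem adjoint_integration_by_parts
    (S : Type*) [Fintype S] [DecidableEq S]
    (I : Type*) [Fintype I]
    (that : ℝ) (hthat : 0 ≤ that)
    (b : I → ℝ) (hb : ∀ i, 0 < b i)
    (h : ℝ → (S → ℝ) → (I → ℝ) → (S → ℝ))
    (hcont : Continuous (fun x : ℝ × (S → ℝ) × (I → ℝ) => h x.1 x.2.1 x.2.2))
    -- h is linear in π
    (hlin : ∀ t (u : I → ℝ), IsLinearMap ℝ (fun π : S → ℝ => h t π u))
    (u ustar : ℝ → I → ℝ)
    (humeas : Measurable u) (hustarmeas : Measurable ustar)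
    (hubox : ∀ t i, |u t i| ≤ b i) (hustarbox : ∀ t i, |ustar t i| ≤ b i)
    (π πstar : ℝ → S → ℝ)
    (hπode : ∀ B, ∀ t ∈ Set.Icc 0 that,
      HasDerivAt (fun s => π s B) (h t (π t) (u t) B) t)
    (hπstarode : ∀ B, ∀ t ∈ Set.Icc 0 that,
      HasDerivAt (fun s => πstar s B) (h t (πstar t) (ustar t) B) t)
    (hinit : π 0 = πstar 0)
    (p : ℝ → S → ℝ)
    -- adjoint equation: ṗ = −(∂_π h)(t, π*, u*)ᵀ p
    (hpode : ∀ B, ∀ t ∈ Set.Icc 0 that,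
      HasDerivAt (fun s => p s B)
        (-(∑ C, p t C * h t (Pi.single B (1 : ℝ)) (ustar t) C)) t) :
    ∑ B, p that B * (π that B - πstar that B)
      = ∫ t in (0 : ℝ)..that,
          ∑ B, p t B * (h t (π t) (u t) B - h t (π t) (ustar t) B) := by
  -- expansion of h in π via linearity
  have hexp : ∀ (t : ℝ) (v : S → ℝ) (w : I → ℝ) (C : S),
      h t v w C = ∑ B, v B * h t (Pi.single B (1 : ℝ)) w C := by
    intro t v w C
    set L : (S → ℝ) →ₗ[ℝ] (S → ℝ) := IsLinearMap.mk' _ (hlin t w) with hL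
    have hv : v = ∑ B, v B • (Pi.single B (1 : ℝ) : S → ℝ) := by
      funext j
      simp [Pi.single_apply, Finset.sum_ite_eq']
    have hLv : h t v w = L v := rfl
    rw [hLv, hv, map_sum]
    simp only [map_smul]
    simp [L, Pi.single_apply, Finset.sum_ite_eq']
  set F : ℝ → ℝ := fun s => ∑ B, p s B * (π s B - πstar s B) with hF
  set g : ℝ → ℝ := fun s =>
    ∑ B, p s B * (h s (π s) (u s) B - h s (π s) (ustar s) B) with hg
  -- derivative of F
  have hderiv : ∀ t ∈ Set.uIcc (0 : ℝ) that, HasDerivAt F (g t) t := by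
    intro t ht
    rw [Set.uIcc_of_le hthat] at ht
    have hD : HasDerivAt F (∑ B,
        ((-(∑ C, p t C * h t (Pi.single B (1 : ℝ)) (ustar t) C)) *
            (π t B - πstar t B)
          + p t B * (h t (π t) (u t) B - h t (πstar t) (ustar t) B))) t := by
      apply HasDerivAt.fun_sum
      intro B _
      exact (hpode B t ht).mul ((hπode B t ht).sub (hπstarode B t ht))
    convert hD using 1
    have hswap : ∑ B, (∑ C, p t C * h t (Pi.single B (1 : ℝ)) (ustar t) C) *
        (π t B - πstar t B)
        = ∑ C, p t C * (h t (π t) (ustar t) C - h t (πstar t) (ustar t) C) := by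
      simp_rw [Finset.sum_mul]
      rw [Finset.sum_comm]
      refine Finset.sum_congr rfl fun C _ => ?_
      have he1 : h t (π t) (ustar t) C - h t (πstar t) (ustar t) C
          = ∑ B, (π t B - πstar t B) * h t (Pi.single B (1 : ℝ)) (ustar t) C := by
        rw [hexp t (π t) (ustar t) C, hexp t (πstar t) (ustar t) C,
          ← Finset.sum_sub_distrib]
        exact Finset.sum_congr rfl fun B _ => by ring
      rw [he1, Finset.mul_sum]
      exact Finset.sum_congr rfl fun B _ => by ring
    have hrhs : (∑ B,
        ((-(∑ C, p t C * h t (Pi.single B (1 : ℝ)) (ustar t) C)) *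
            (π t B - πstar t B)
          + p t B * (h t (π t) (u t) B - h t (πstar t) (ustar t) B)))
        = (∑ B, p t B * (h t (π t) (u t) B - h t (πstar t) (ustar t) B))
          - ∑ B, (∑ C, p t C * h t (Pi.single B (1 : ℝ)) (ustar t) C) *
              (π t B - πstar t B) := by
      rw [Finset.sum_add_distrib]
      simp [neg_mul, sub_eq_add_neg, add_comm, Finset.sum_neg_distrib]
    rw [hrhs, hswap, ← Finset.sum_sub_distrib]
    exact Finset.sum_congr rfl fun B _ => by ring
  -- continuity of p, π on the interval
  have hπcont : ContinuousOn π (Set.Icc 0 that) := by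
    rw [continuousOn_pi]
    exact fun B t ht => (hπode B t ht).continuousAt.continuousWithinAt
  have hpcont : ContinuousOn p (Set.Icc 0 that) := by
    rw [continuousOn_pi]
    exact fun B t ht => (hpode B t ht).continuousAt.continuousWithinAt
  -- compact sets
  set box : Set (I → ℝ) := Set.pi Set.univ (fun i => Set.Icc (-(b i)) (b i))
    with hbox
  have hboxc : IsCompact box := isCompact_univ_pi fun i => isCompact_Icc
  have hK1 : IsCompact (π '' Set.Icc 0 that) :=
    (isCompact_Icc.image_of_continuousOn hπcont)
  set K : Set (ℝ × (S → ℝ) × (I → ℝ)) :=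
    (Set.Icc 0 that) ×ˢ ((π '' Set.Icc 0 that) ×ˢ box) with hK
  have hKc : IsCompact K := isCompact_Icc.prod (hK1.prod hboxc)
  obtain ⟨Mh, hMh⟩ := hKc.exists_bound_of_continuousOn hcont.continuousOn
  obtain ⟨Mp, hMp⟩ :=
    (isCompact_Icc.image_of_continuousOn hpcont).exists_bound_of_continuousOn
      continuousOn_id
  -- pointwise bound on g over the interval
  have hbound : ∀ t ∈ Set.Icc 0 that,
      ‖g t‖ ≤ (Fintype.card S : ℝ) * (Mp * (2 * Mh)) := by
    intro t ht
    have hmem : ∀ (w : ℝ → I → ℝ), (∀ s i, |w s i| ≤ b i) →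
        ((t, π t, w t) : ℝ × (S → ℝ) × (I → ℝ)) ∈ K := by
      intro w hw
      refine ⟨ht, Set.mem_image_of_mem _ ht, fun i _ => ?_⟩
      exact abs_le.1 (hw t i)
    have hMh0 : ∀ (w : ℝ → I → ℝ), (∀ s i, |w s i| ≤ b i) → ∀ B,
        |h t (π t) (w t) B| ≤ Mh := by
      intro w hw B
      have := hMh _ (hmem w hw)
      exact le_trans (norm_le_pi_norm (h t (π t) (w t)) B) this
    have hMp0 : ∀ B, |p t B| ≤ Mp := by
      intro B
      have := hMp (p t) (Set.mem_image_of_mem _ ht)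
      exact le_trans (norm_le_pi_norm (p t) B) this
    calc ‖g t‖ ≤ ∑ B, ‖p t B * (h t (π t) (u t) B - h t (π t) (ustar t) B)‖ :=
          norm_sum_le _ _
      _ ≤ ∑ B : S, Mp * (2 * Mh) := by
          refine Finset.sum_le_sum fun B _ => ?_
          rw [norm_mul]
          have h1 : ‖h t (π t) (u t) B - h t (π t) (ustar t) B‖ ≤ 2 * Mh := by
            calc ‖h t (π t) (u t) B - h t (π t) (ustar t) B‖
                ≤ ‖h t (π t) (u t) B‖ + ‖h t (π t) (ustar t) B‖ := norm_sub_le _ _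
              _ ≤ Mh + Mh := add_le_add (hMh0 u hubox B) (hMh0 ustar hustarbox B)
              _ = 2 * Mh := by ring
          exact mul_le_mul (hMp0 B) h1 (norm_nonneg _)
            ((abs_nonneg _).trans (hMp0 B))
      _ = (Fintype.card S : ℝ) * (Mp * (2 * Mh)) := by
          rw [Finset.sum_const]
          simp [mul_comm]
  -- measurability
  set μ : MeasureTheory.Measure ℝ :=
    MeasureTheory.volume.restrict (Set.Ioc 0 that) with hμ
  have hπmeas : AEMeasurable π μ := by
    have : AEMeasurable π (MeasureTheory.volume.restrict (Set.Icc 0 that)) :=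
      hπcont.aemeasurable measurableSet_Icc
    exact this.mono_measure
      (MeasureTheory.Measure.restrict_mono Set.Ioc_subset_Icc_self le_rfl)
  have hpmeas : AEMeasurable p μ := by
    have : AEMeasurable p (MeasureTheory.volume.restrict (Set.Icc 0 that)) :=
      hpcont.aemeasurable measurableSet_Icc
    exact this.mono_measure
      (MeasureTheory.Measure.restrict_mono Set.Ioc_subset_Icc_self le_rfl)
  have hhm : ∀ (w : ℝ → I → ℝ), Measurable w → ∀ B,
      AEMeasurable (fun t => h t (π t) (w t) B) μ := by
    intro w hw B
    have hΦ : AEMeasurable (fun t => ((t, π t, w t) : ℝ × (S → ℝ) × (I → ℝ))) μ :=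
      aemeasurable_id.prodMk (hπmeas.prodMk hw.aemeasurable)
    have : AEMeasurable (fun t => h t (π t) (w t)) μ :=
      hcont.measurable.comp_aemeasurable hΦ
    exact ((measurable_pi_apply B).comp_aemeasurable this)
  have hgmeas : AEMeasurable g μ := by
    apply Finset.aemeasurable_fun_sum
    intro B _
    exact (((measurable_pi_apply B).comp_aemeasurable hpmeas)).mul
      ((hhm u humeas B).sub (hhm ustar hustarmeas B))
  -- integrability
  have hgint : IntervalIntegrable g MeasureTheory.volume 0 that := by
    rw [intervalIntegrable_iff_integrableOn_Ioc_of_le hthat]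
    have hconst : MeasureTheory.Integrable
        (fun _ : ℝ => (Fintype.card S : ℝ) * (Mp * (2 * Mh))) μ :=
      MeasureTheory.integrableOn_const measure_Ioc_lt_top.ne
    refine MeasureTheory.Integrable.mono' hconst
      hgmeas.aestronglyMeasurable ?_
    refine (MeasureTheory.ae_restrict_iff'
      measurableSet_Ioc).2 (MeasureTheory.ae_of_all _ fun t ht => ?_)
    exact hbound t (Set.mem_Icc_of_Ioc ht)
  have hFTC := intervalIntegral.integral_eq_sub_of_hasDerivAt hderiv hgint
  have hF0 : F 0 = 0 := by
    simp [hF, hinit]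
  rw [hFTC, hF0, sub_zero]
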